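/- Let P ∈ ℂ[z] be a polynomial of degree d ≥ 2 with leading coefficient A. The sequence of functions g_n(z) := d^{-n} log⁺|P^{[n]}(z)| converges uniformly on ℂ to a continuous function g_P : ℂ → [0,∞) satisfying: (i) g_P(P(z)) = d · g_P(z) for all z ∈ ℂ; (ii) g_P(z) − log|z| tends to (1/(d−1)) log|A| as |z| → ∞; (iii) g_P(z) = 0 if and only if the forward orbit of z under P is bounded. -/

import Mathlib

open Filter

namespace Stmt9Aux

/-- `log⁺` implemented as `log (max x 1)`. -/
noncomputable def lpos (x : ℝ) : ℝ := Real.log (max x 1)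

lemma lp_nonneg (x : ℝ) : 0 ≤ lpos x := Real.log_nonneg (le_max_right _ _)

lemma max_log_eq_lp (x : ℝ) (hx : 0 ≤ x) : max (Real.log x) 0 = lpos x := by
  rcases le_or_gt 1 x with h | h
  · rw [lpos, max_eq_left h, max_eq_left (Real.log_nonneg h)]
  · rw [lpos, max_eq_right h.le, Real.log_one, max_eq_right (Real.log_nonpos hx h.le)]

lemma lp_mono {x y : ℝ} (h : x ≤ y) : lpos x ≤ lpos y := by
  unfold lpos
  have h0 : (0:ℝ) < max x 1 := lt_of_lt_of_le one_pos (le_max_right _ _)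
  exact Real.log_le_log h0 (max_le_max h le_rfl)

lemma lp_of_one_le {x : ℝ} (h : 1 ≤ x) : lpos x = Real.log x := by rw [lpos, max_eq_left h]

lemma log_le_lp {x : ℝ} (hx : 0 ≤ x) : Real.log x ≤ lpos x := by
  rcases eq_or_lt_of_le hx with h | h
  · simp [← h, lpos]
  · exact Real.log_le_log h (le_max_left _ _)

lemma continuous_lp_abs : Continuous fun z : ℂ => lpos (‖z‖) := by
  apply Continuous.log
  · exact continuous_norm.max continuous_const
  · intro z
    exact ne_of_gt (lt_of_lt_of_le one_pos (le_max_right _ _))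

lemma poly_upper (Q : Polynomial ℂ) (m : ℕ) (hm : Q.natDegree ≤ m) :
    ∃ S : ℝ, 1 ≤ S ∧ ∀ w : ℂ, ‖Q.eval w‖ ≤ S * max (‖w‖) 1 ^ m := by
  refine ⟨1 + ∑ i ∈ Finset.range (m+1), ‖Q.coeff i‖, by
    have : (0:ℝ) ≤ ∑ i ∈ Finset.range (m+1), ‖Q.coeff i‖ :=
      Finset.sum_nonneg fun i _ => norm_nonneg _
    linarith, fun w => ?_⟩
  have hM : (1:ℝ) ≤ max (‖w‖) 1 := le_max_right _ _
  have hM0 : (0:ℝ) ≤ max (‖w‖) 1 := le_trans zero_le_one hM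
  rw [Polynomial.eval_eq_sum_range' (Nat.lt_succ_of_le hm)]
  calc ‖∑ i ∈ Finset.range (m+1), Q.coeff i * w ^ i‖
      ≤ ∑ i ∈ Finset.range (m+1), ‖Q.coeff i * w ^ i‖ :=
        norm_sum_le _ _
    _ ≤ ∑ i ∈ Finset.range (m+1), ‖Q.coeff i‖ * max (‖w‖) 1 ^ m := by
        apply Finset.sum_le_sum
        intro i hi
        rw [norm_mul, norm_pow]
        have h1 : ‖w‖ ^ i ≤ max (‖w‖) 1 ^ i :=
          pow_le_pow_left₀ (norm_nonneg w) (le_max_left _ _) i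
        have h2 : max (‖w‖) 1 ^ i ≤ max (‖w‖) 1 ^ m :=
          pow_le_pow_right₀ hM (Nat.lt_succ_iff.mp (Finset.mem_range.mp hi))
        exact mul_le_mul_of_nonneg_left (h1.trans h2) (norm_nonneg _)
    _ = (∑ i ∈ Finset.range (m+1), ‖Q.coeff i‖) * max (‖w‖) 1 ^ m :=
        (Finset.sum_mul _ _ _).symm
    _ ≤ (1 + ∑ i ∈ Finset.range (m+1), ‖Q.coeff i‖) * max (‖w‖) 1 ^ m := by
        have : (0:ℝ) ≤ max (‖w‖) 1 ^ m := pow_nonneg hM0 m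
        nlinarith

end Stmt9Aux

open Stmt9Aux

set_option maxHeartbeats 1000000 in
/-- Existence and basic properties of the Green function of a complex polynomial of degree
`d ≥ 2`: the functions `d^{-n} log⁺|P^[n](z)|` converge uniformly on `ℂ` to a continuous
nonnegative function `g` satisfying `g ∘ P = d g`, `g(z) - log|z| → (1/(d-1)) log|A|`
as `|z| → ∞` (where `A` is the leading coefficient), and `g(z) = 0` iff the orbit of `z`
is bounded. -/
theorem stmt9 (d : ℕ) (hd : 2 ≤ d) (P : Polynomial ℂ) (hdeg : P.natDegree = d) :
    ∃ g : ℂ → ℝ,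
      TendstoUniformly
        (fun (n : ℕ) (z : ℂ) =>
          ((d : ℝ) ^ n)⁻¹ * max (Real.log (‖(fun w => P.eval w)^[n] z‖)) 0)
        g atTop ∧
      Continuous g ∧
      (∀ z : ℂ, 0 ≤ g z) ∧
      (∀ z : ℂ, g (P.eval z) = (d : ℝ) * g z) ∧
      Tendsto (fun z : ℂ => g z - Real.log (‖z‖))
        (comap (fun z : ℂ => ‖z‖) atTop)
        (nhds (((d : ℝ) - 1)⁻¹ * Real.log (‖P.leadingCoeff‖))) ∧
      (∀ z : ℂ, g z = 0 ↔ ∃ M : ℝ, ∀ n : ℕ, ‖(fun w => P.eval w)^[n] z‖ ≤ M) := by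
  classical
  set f : ℂ → ℂ := fun w => P.eval w with hf
  have hd2 : (2:ℝ) ≤ (d:ℝ) := by exact_mod_cast hd
  have hd1 : (1:ℝ) < (d:ℝ) := by linarith
  have hdne : (d:ℝ) ≠ 0 := by linarith
  set r : ℝ := (d:ℝ)⁻¹ with hr
  have hr0 : 0 ≤ r := by rw [hr]; positivity
  have hrpos : 0 < r := by rw [hr]; positivity
  have hr1 : r < 1 := by rw [hr]; exact inv_lt_one_of_one_lt₀ hd1
  have hrd : r * (d:ℝ) = 1 := inv_mul_cancel₀ hdne
  have hPne : P ≠ 0 := by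
    intro hP
    rw [hP, Polynomial.natDegree_zero] at hdeg
    omega
  set A : ℝ := ‖P.leadingCoeff‖ with hA_def
  have hA : 0 < A := by
    rw [hA_def]
    exact norm_pos_iff.mpr (Polynomial.leadingCoeff_ne_zero.mpr hPne)
  -- upper bound for P itself
  obtain ⟨S₂, hS₂1, hS₂b⟩ := poly_upper P d (le_of_eq hdeg)
  -- bound for erased leading term
  obtain ⟨S, hS1, hSb⟩ := poly_upper P.eraseLead (d-1)
    ((Polynomial.eraseLead_natDegree_le P).trans (by omega))
  have hsplit : ∀ w : ℂ, P.eval w - P.leadingCoeff * w ^ d = P.eraseLead.eval w := by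
    intro w
    have h := congrArg (fun q : Polynomial ℂ => q.eval w)
      (Polynomial.eraseLead_add_C_mul_X_pow P)
    simp only [Polynomial.eval_add, Polynomial.eval_mul, Polynomial.eval_C,
      Polynomial.eval_pow, Polynomial.eval_X, hdeg] at h
    linear_combination -h
  have hQb : ∀ w : ℂ, 1 ≤ ‖w‖ →
      ‖P.eraseLead.eval w‖ ≤ S * ‖w‖ ^ (d-1) := by
    intro w hw
    have := hSb w
    rwa [max_eq_left hw] at this
  set R1 : ℝ := max 1 (2 * S / A) with hR1_def
  have hR1 : (1:ℝ) ≤ R1 := le_max_left _ _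
  have hlow : ∀ w : ℂ, R1 ≤ ‖w‖ →
      A / 2 * ‖w‖ ^ d ≤ ‖P.eval w‖ := by
    intro w hw
    have h1 : (1:ℝ) ≤ ‖w‖ := le_trans hR1 hw
    have h2 : 2 * S / A ≤ ‖w‖ := le_trans (le_max_right _ _) hw
    have h2' : 2 * S ≤ ‖w‖ * A := (div_le_iff₀ hA).mp h2
    have hdd : ‖w‖ ^ d = ‖w‖ ^ (d-1) * ‖w‖ := by
      conv_lhs => rw [show d = (d-1)+1 by omega]
      rw [pow_succ]
    have hx0 : (0:ℝ) ≤ ‖w‖ ^ (d-1) := pow_nonneg (norm_nonneg w) _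
    have h4 : A * ‖w‖ ^ d ≤
        ‖P.eval w‖ + S * ‖w‖ ^ (d-1) := by
      calc A * ‖w‖ ^ d = ‖P.leadingCoeff * w ^ d‖ := by
            rw [norm_mul, norm_pow, hA_def]
        _ = ‖P.eval w + -(P.eraseLead.eval w)‖ := by
            congr 1
            linear_combination -(hsplit w)
        _ ≤ ‖P.eval w‖ + ‖-(P.eraseLead.eval w)‖ :=
            norm_add_le _ _
        _ = ‖P.eval w‖ + ‖P.eraseLead.eval w‖ := by rw [norm_neg]
        _ ≤ ‖P.eval w‖ + S * ‖w‖ ^ (d-1) := by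
            have := hQb w h1
            linarith
    rw [hdd] at h4 ⊢
    nlinarith [mul_nonneg hx0 (by linarith : (0:ℝ) ≤ ‖w‖ * A - 2 * S)]
  -- the error function and its bound
  set e : ℂ → ℝ := fun w => lpos (‖P.eval w‖) - d * lpos (‖w‖) with he
  set C : ℝ := max (Real.log S₂) (max ((d:ℝ) * Real.log R1) (-Real.log (A/2))) with hC_def
  have hC0 : 0 ≤ C := le_trans (Real.log_nonneg hS₂1) (le_max_left _ _)
  have hCb : ∀ w : ℂ, |e w| ≤ C := by
    intro w
    rw [abs_le]
    constructor
    · -- lower bound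
      rcases le_or_gt (‖w‖) R1 with hcase | hcase
      · have hub : lpos (‖w‖) ≤ Real.log R1 := by
          unfold lpos
          exact Real.log_le_log (lt_of_lt_of_le one_pos (le_max_right _ _))
            (max_le hcase hR1)
        have hbig1 : (d:ℝ) * lpos (‖w‖) ≤ (d:ℝ) * Real.log R1 :=
          mul_le_mul_of_nonneg_left hub (by linarith)
        have hbig2 : (d:ℝ) * Real.log R1 ≤ C :=
          le_trans (le_max_left _ _) (le_max_right _ _)
        have hbig3 : 0 ≤ lpos (‖P.eval w‖) := lp_nonneg _
        simp only [he]
        linarith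
      · have h1 : (1:ℝ) ≤ ‖w‖ := le_trans hR1 hcase.le
        have hpos : (0:ℝ) < A / 2 * ‖w‖ ^ d := by positivity
        have hPw := hlow w hcase.le
        have h2 : Real.log (A / 2 * ‖w‖ ^ d) ≤ lpos (‖P.eval w‖) :=
          le_trans (Real.log_le_log hpos hPw) (log_le_lp (norm_nonneg _))
        have h3 : Real.log (A / 2 * ‖w‖ ^ d)
            = Real.log (A/2) + (d:ℝ) * Real.log (‖w‖) := by
          rw [Real.log_mul (by positivity) (by positivity), Real.log_pow]
        have h4 : lpos (‖w‖) = Real.log (‖w‖) := lp_of_one_le h1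
        have h5 : -Real.log (A/2) ≤ C :=
          le_trans (le_max_right _ _) (le_max_right _ _)
        simp only [he]
        rw [h4]
        linarith
    · -- upper bound
      have hM : (1:ℝ) ≤ max (‖w‖) 1 := le_max_right _ _
      have hMd : (1:ℝ) ≤ max (‖w‖) 1 ^ d := by
        calc (1:ℝ) = 1 ^ d := (one_pow d).symm
          _ ≤ max (‖w‖) 1 ^ d := pow_le_pow_left₀ zero_le_one hM d
      have h1 : max (‖P.eval w‖) 1 ≤ S₂ * max (‖w‖) 1 ^ d := by
        apply max_le (hS₂b w)
        nlinarith
      have h2 : lpos (‖P.eval w‖) ≤ Real.log (S₂ * max (‖w‖) 1 ^ d) := by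
        unfold lpos
        exact Real.log_le_log (lt_of_lt_of_le one_pos (le_max_right _ _)) h1
      have h3 : Real.log (S₂ * max (‖w‖) 1 ^ d)
          = Real.log S₂ + (d:ℝ) * lpos (‖w‖) := by
        unfold lpos
        rw [Real.log_mul (by linarith) (by positivity), Real.log_pow]
      have h4 : Real.log S₂ ≤ C := le_max_left _ _
      simp only [he]
      linarith
  -- the series
  set F : ℕ → ℂ → ℝ := fun k z => r ^ (k+1) * e (f^[k] z) with hF
  have hsum_r : Summable (fun k : ℕ => r ^ (k+1)) :=
    ((summable_geometric_of_lt_one hr0 hr1).mul_left r).congr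
      (fun k => (pow_succ' r k).symm)
  have hgeo : ∑' k : ℕ, r ^ (k+1) = ((d:ℝ) - 1)⁻¹ := by
    have h1 : ∑' k : ℕ, r ^ (k+1) = r * ∑' k : ℕ, r ^ k := by
      rw [← tsum_mul_left]
      exact tsum_congr fun k => pow_succ' r k
    rw [h1, tsum_geometric_of_lt_one hr0 hr1, hr]
    rw [← mul_inv]
    congr 1
    field_simp
  have hFb : ∀ k (z : ℂ), ‖F k z‖ ≤ C * r ^ (k+1) := by
    intro k z
    simp only [hF, Real.norm_eq_abs, abs_mul, abs_pow, abs_of_nonneg hr0]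
    rw [mul_comm C _]
    exact mul_le_mul_of_nonneg_left (hCb _) (pow_nonneg hr0 _)
  have hsumC : Summable (fun k : ℕ => C * r ^ (k+1)) := hsum_r.mul_left C
  have hsumF : ∀ z : ℂ, Summable (fun k => F k z) := fun z =>
    Summable.of_norm_bounded hsumC (fun k => hFb k z)
  have hsumFnorm : ∀ z : ℂ, Summable (fun k => ‖F k z‖) := fun z =>
    Summable.of_nonneg_of_le (fun k => norm_nonneg _) (fun k => hFb k z) hsumC
  set g : ℂ → ℝ := fun z => lpos (‖z‖) + ∑' k, F k z with hg
  set Gn : ℕ → ℂ → ℝ := fun n z => r ^ n * lpos (‖f^[n] z‖) with hGn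
  -- telescoping
  have htel : ∀ n (z : ℂ), Gn n z = lpos (‖z‖) + ∑ k ∈ Finset.range n, F k z := by
    intro n z
    induction n with
    | zero => simp [hGn]
    | succ n ih =>
      have hstep : Gn (n+1) z = Gn n z + F n z := by
        simp only [hGn, hF]
        rw [Function.iterate_succ_apply']
        have : lpos (‖f (f^[n] z)‖)
            = e (f^[n] z) + (d:ℝ) * lpos (‖f^[n] z‖) := by
          simp only [he, hf]
          ring
        rw [this]
        linear_combination (lpos (‖f^[n] z‖)) * (by
          rw [pow_succ, mul_assoc, hrd, mul_one] :
            r ^ (n+1) * (d:ℝ) = r ^ n)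
      rw [hstep, ih, Finset.sum_range_succ]
      ring
  -- uniform convergence
  have hconstu : TendstoUniformly (fun (_ : ℕ) (z : ℂ) => lpos (‖z‖))
      (fun z => lpos (‖z‖)) atTop := by
    intro u hu
    exact Eventually.of_forall fun n => fun x => refl_mem_uniformity hu
  have hseries : TendstoUniformly (fun (N : ℕ) (z : ℂ) => ∑ k ∈ Finset.range N, F k z)
      (fun z => ∑' k, F k z) atTop := by
    rw [← tendstoUniformlyOn_univ]
    exact tendstoUniformlyOn_tsum_nat hsumC (fun k x _ => hFb k x)
  have huni : TendstoUniformly Gn g atTop := by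
    have hGn_eq : Gn = (fun (_ : ℕ) (z : ℂ) => lpos (‖z‖))
        + (fun (N : ℕ) (z : ℂ) => ∑ k ∈ Finset.range N, F k z) := by
      funext n z
      exact htel n z
    have hg_eq : g = (fun z : ℂ => lpos (‖z‖)) + (fun z : ℂ => ∑' k, F k z) := by
      funext z
      rfl
    rw [hGn_eq, hg_eq]
    exact hconstu.add hseries
  have hpt : ∀ z : ℂ, Tendsto (fun n => Gn n z) atTop (nhds (g z)) := huni.tendsto_at
  -- functional equation
  have hfun : ∀ z : ℂ, g (P.eval z) = (d:ℝ) * g z := by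
    intro z
    have h1 : Tendsto (fun n => Gn n (P.eval z)) atTop (nhds (g (P.eval z))) := hpt _
    have h2 : ∀ n, Gn n (P.eval z) = (d:ℝ) * Gn (n+1) z := by
      intro n
      simp only [hGn]
      rw [show f^[n] (P.eval z) = f^[n+1] z from (Function.iterate_succ_apply f n z).symm]
      linear_combination (-(r ^ n * lpos (‖f^[n+1] z‖))) * hrd
    have h3 : Tendsto (fun n => (d:ℝ) * Gn (n+1) z) atTop (nhds ((d:ℝ) * g z)) :=
      ((hpt z).comp (tendsto_add_atTop_nat 1)).const_mul (d:ℝ)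
    exact tendsto_nhds_unique (Tendsto.congr h2 h1) h3
  -- iterated functional equation
  have hiterg : ∀ (N : ℕ) (z : ℂ), g (f^[N] z) = (d:ℝ) ^ N * g z := by
    intro N z
    induction N with
    | zero => simp
    | succ N ih =>
      rw [Function.iterate_succ_apply', show f (f^[N] z) = P.eval (f^[N] z) from rfl,
        hfun, ih, pow_succ]
      ring
  -- global lower bound on g
  have hglb : ∀ w : ℂ, |g w - lpos (‖w‖)| ≤ C * ((d:ℝ)-1)⁻¹ := by
    intro w
    have h1 : g w - lpos (‖w‖) = ∑' k, F k w := by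
      simp only [hg]
      ring
    rw [h1, ← Real.norm_eq_abs]
    calc ‖∑' k, F k w‖ ≤ ∑' k, ‖F k w‖ := norm_tsum_le_tsum_norm (hsumFnorm w)
      _ ≤ ∑' k, C * r ^ (k+1) := Summable.tsum_le_tsum (fun k => hFb k w) (hsumFnorm w) hsumC
      _ = C * ∑' k, r ^ (k+1) := tsum_mul_left
      _ = C * ((d:ℝ)-1)⁻¹ := by rw [hgeo]
  -- escape estimates
  set Resc : ℝ := max R1 (2 / A) with hResc_def
  have hRescR1 : R1 ≤ Resc := le_max_left _ _
  have hResc1 : (1:ℝ) ≤ Resc := le_trans hR1 hRescR1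
  have hesc : ∀ w : ℂ, Resc ≤ ‖w‖ → ‖w‖ ≤ ‖P.eval w‖ := by
    intro w hw
    have h1 : (1:ℝ) ≤ ‖w‖ := le_trans hResc1 hw
    have h2 : 2 / A ≤ ‖w‖ := le_trans (le_max_right _ _) hw
    have h3 := hlow w (le_trans hRescR1 hw)
    have hp : 2 / A ≤ ‖w‖ ^ (d-1) :=
      le_trans h2 (le_self_pow₀ h1 (by omega))
    have hp' : 2 ≤ ‖w‖ ^ (d-1) * A := (div_le_iff₀ hA).mp hp
    have hdd : ‖w‖ ^ d = ‖w‖ ^ (d-1) * ‖w‖ := by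
      conv_lhs => rw [show d = (d-1)+1 by omega]
      rw [pow_succ]
    rw [hdd] at h3
    nlinarith [norm_nonneg w]
  have hescIter : ∀ R : ℝ, Resc ≤ R → ∀ z : ℂ, R ≤ ‖z‖ →
      ∀ k : ℕ, R ≤ ‖f^[k] z‖ := by
    intro R hR z hz k
    induction k with
    | zero => simpa using hz
    | succ k ih =>
      rw [Function.iterate_succ_apply']
      exact ih.trans (hesc _ (hR.trans ih))
  -- pointwise limit of the error
  have hlim : ∀ ε : ℝ, 0 < ε → ∃ R : ℝ, Resc ≤ R ∧
      ∀ w : ℂ, R ≤ ‖w‖ → |e w - Real.log A| ≤ ε := by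
    intro ε hε
    have hc := Real.continuousAt_log (ne_of_gt hA)
    rw [Metric.continuousAt_iff] at hc
    obtain ⟨δ, hδ0, hδ⟩ := hc ε hε
    refine ⟨max Resc (2*S/δ), le_max_left _ _, fun w hw => ?_⟩
    have hwResc : Resc ≤ ‖w‖ := le_trans (le_max_left _ _) hw
    have hw1 : (1:ℝ) ≤ ‖w‖ := le_trans hResc1 hwResc
    have hw0 : (0:ℝ) < ‖w‖ := lt_of_lt_of_le one_pos hw1
    have hwR1 : R1 ≤ ‖w‖ := le_trans hRescR1 hwResc
    have hw2A : 2 / A ≤ ‖w‖ := le_trans (le_max_right _ _) hwResc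
    have hwδ : 2*S/δ ≤ ‖w‖ := le_trans (le_max_right _ _) hw
    have hwδ' : 2*S ≤ ‖w‖ * δ := (div_le_iff₀ hδ0).mp hwδ
    have hPw := hlow w hwR1
    have hwd1 : ‖w‖ ≤ ‖w‖ ^ d := le_self_pow₀ hw1 (by omega)
    have hwd0 : (0:ℝ) < ‖w‖ ^ d := by positivity
    have hPw1 : (1:ℝ) ≤ ‖P.eval w‖ := by
      have : (2:ℝ) ≤ ‖w‖ * A := (div_le_iff₀ hA).mp hw2A
      nlinarith
    have hPw0 : (0:ℝ) < ‖P.eval w‖ := lt_of_lt_of_le one_pos hPw1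
    -- numerator bound
    have hnum : |‖P.eval w‖ - A * ‖w‖ ^ d|
        ≤ S * ‖w‖ ^ (d-1) := by
      have h1 : |‖P.eval w‖ - ‖P.leadingCoeff * w ^ d‖|
          ≤ ‖P.eval w - P.leadingCoeff * w ^ d‖ := abs_norm_sub_norm_le _ _
      rw [hsplit w] at h1
      rw [norm_mul, norm_pow, ← hA_def] at h1
      exact h1.trans (hQb w hw1)
    have hdd : ‖w‖ ^ d = ‖w‖ ^ (d-1) * ‖w‖ := by
      conv_lhs => rw [show d = (d-1)+1 by omega]
      rw [pow_succ]
    set x : ℝ := ‖P.eval w‖ / ‖w‖ ^ d with hx_def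
    have hx : |x - A| ≤ S / ‖w‖ := by
      have h1 : x - A = (‖P.eval w‖ - A * ‖w‖ ^ d)
          / ‖w‖ ^ d := by
        rw [hx_def, sub_div, mul_div_assoc, div_self (ne_of_gt hwd0), mul_one]
      rw [h1, abs_div, abs_of_pos hwd0]
      rw [div_le_div_iff₀ hwd0 hw0]
      calc |‖P.eval w‖ - A * ‖w‖ ^ d| * ‖w‖
          ≤ (S * ‖w‖ ^ (d-1)) * ‖w‖ :=
            mul_le_mul_of_nonneg_right hnum (norm_nonneg w)
        _ = S * ‖w‖ ^ d := by rw [hdd]; ring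
    have hxδ : dist x A < δ := by
      rw [Real.dist_eq]
      have h2 : S / ‖w‖ < δ := by
        rw [div_lt_iff₀ hw0]
        nlinarith
      exact lt_of_le_of_lt hx h2
    have hlog := hδ hxδ
    rw [Real.dist_eq] at hlog
    have hxlog : Real.log x = Real.log (‖P.eval w‖)
        - (d:ℝ) * Real.log (‖w‖) := by
      rw [hx_def, Real.log_div (ne_of_gt hPw0) (ne_of_gt hwd0), Real.log_pow]
    have hew : e w = Real.log x := by
      simp only [he]
      rw [lp_of_one_le hPw1, lp_of_one_le hw1, hxlog]
    rw [hew]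
    exact le_of_lt hlog
  -- sum of geometric times log A
  have hsumlog : Summable (fun k : ℕ => r ^ (k+1) * Real.log A) := hsum_r.mul_right _
  have hLsum : ∑' k : ℕ, r ^ (k+1) * Real.log A = ((d:ℝ)-1)⁻¹ * Real.log A := by
    rw [tsum_mul_right, hgeo]
  have hdinv1 : ((d:ℝ)-1)⁻¹ ≤ 1 := by
    rw [inv_le_one_iff₀]
    right
    linarith
  have hdinv0 : (0:ℝ) < ((d:ℝ)-1)⁻¹ := by
    apply inv_pos.mpr
    linarith
  refine ⟨g, ?_, ?_, ?_, hfun, ?_, ?_⟩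
  · -- uniform convergence
    have hEq : (fun (n : ℕ) (z : ℂ) =>
        ((d:ℝ) ^ n)⁻¹ * max (Real.log (‖f^[n] z‖)) 0) = Gn := by
      funext n z
      show ((d:ℝ) ^ n)⁻¹ * max (Real.log (‖f^[n] z‖)) 0
        = r ^ n * lpos (‖f^[n] z‖)
      rw [max_log_eq_lp _ (norm_nonneg _), hr, inv_pow]
    rw [hEq]
    exact huni
  · -- continuity
    apply huni.continuous
    apply Frequently.of_forall
    intro n
    exact continuous_const.mul (continuous_lp_abs.comp ((P.continuous).iterate n))
  · -- nonnegativity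
    intro z
    refine ge_of_tendsto' (hpt z) fun n => ?_
    exact mul_nonneg (pow_nonneg hr0 n) (lp_nonneg _)
  · -- asymptotics
    rw [Metric.tendsto_nhds]
    intro ε hε
    obtain ⟨R, hRResc, hR⟩ := hlim (ε/2) (by linarith)
    rw [eventually_comap]
    filter_upwards [eventually_ge_atTop R] with b hb z hzb
    have hzR : R ≤ ‖z‖ := by rw [hzb]; exact hb
    have hz1 : (1:ℝ) ≤ ‖z‖ := le_trans (le_trans hResc1 hRResc) hzR
    have hiter : ∀ k, R ≤ ‖f^[k] z‖ := hescIter R hRResc z hzR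
    have hterm : ∀ k, ‖F k z - r ^ (k+1) * Real.log A‖ ≤ r ^ (k+1) * (ε/2) := by
      intro k
      have h1 : F k z - r ^ (k+1) * Real.log A
          = r ^ (k+1) * (e (f^[k] z) - Real.log A) := by
        simp only [hF]
        ring
      rw [h1, Real.norm_eq_abs, abs_mul, abs_pow, abs_of_nonneg hr0]
      exact mul_le_mul_of_nonneg_left (hR _ (hiter k)) (pow_nonneg hr0 _)
    have hsumdiff : Summable (fun k => F k z - r ^ (k+1) * Real.log A) :=
      (hsumF z).sub hsumlog
    have hsumdiffnorm : Summable (fun k => ‖F k z - r ^ (k+1) * Real.log A‖) :=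
      Summable.of_nonneg_of_le (fun k => norm_nonneg _) hterm (hsum_r.mul_right _)
    have hkey : g z - Real.log (‖z‖) - ((d:ℝ)-1)⁻¹ * Real.log A
        = ∑' k, (F k z - r ^ (k+1) * Real.log A) := by
      rw [Summable.tsum_sub (hsumF z) hsumlog, hLsum]
      have : g z = lpos (‖z‖) + ∑' k, F k z := rfl
      rw [this, lp_of_one_le hz1]
      ring
    rw [Real.dist_eq, hkey]
    calc |∑' k, (F k z - r ^ (k+1) * Real.log A)|
        = ‖∑' k, (F k z - r ^ (k+1) * Real.log A)‖ := (Real.norm_eq_abs _).symm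
      _ ≤ ∑' k, ‖F k z - r ^ (k+1) * Real.log A‖ := norm_tsum_le_tsum_norm hsumdiffnorm
      _ ≤ ∑' k, r ^ (k+1) * (ε/2) :=
          Summable.tsum_le_tsum hterm hsumdiffnorm (hsum_r.mul_right _)
      _ = ((d:ℝ)-1)⁻¹ * (ε/2) := by rw [tsum_mul_right, hgeo]
      _ < ε := by nlinarith
  · -- orbit characterization
    intro z
    constructor
    · intro hgz
      by_contra hnb
      push_neg at hnb
      obtain ⟨N, hN⟩ := hnb (Real.exp (C * ((d:ℝ)-1)⁻¹ + 1))
      have hexp1 : (1:ℝ) ≤ Real.exp (C * ((d:ℝ)-1)⁻¹ + 1) := by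
        apply Real.one_le_exp
        have := mul_nonneg hC0 (le_of_lt hdinv0)
        linarith
      have h1N : (1:ℝ) ≤ ‖f^[N] z‖ := le_trans hexp1 hN.le
      have h1 : C * ((d:ℝ)-1)⁻¹ + 1 ≤ lpos (‖f^[N] z‖) := by
        rw [lp_of_one_le h1N]
        calc C * ((d:ℝ)-1)⁻¹ + 1
            = Real.log (Real.exp (C * ((d:ℝ)-1)⁻¹ + 1)) := (Real.log_exp _).symm
          _ ≤ Real.log (‖f^[N] z‖) :=
              Real.log_le_log (Real.exp_pos _) hN.le
      have h2 := hglb (f^[N] z)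
      rw [abs_le] at h2
      have h3 : 1 ≤ g (f^[N] z) := by
        have hx := h2.1
        have hy : C * ((d:ℝ)-1)⁻¹ + 1 ≤ lpos (‖f^[N] z‖) := h1
        clear_value g C
        linarith [hx, hy]
      have h4 : g (f^[N] z) = (d:ℝ) ^ N * g z := hiterg N z
      rw [hgz, mul_zero] at h4
      clear_value g
      linarith
    · rintro ⟨M, hM⟩
      have hub : ∀ n, Gn n z ≤ r ^ n * lpos M := fun n =>
        mul_le_mul_of_nonneg_left (lp_mono (hM n)) (pow_nonneg hr0 n)
      have hlb : ∀ n, 0 ≤ Gn n z := fun n =>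
        mul_nonneg (pow_nonneg hr0 n) (lp_nonneg _)
      have h0 : Tendsto (fun n => Gn n z) atTop (nhds 0) := by
        apply squeeze_zero hlb hub
        have := (tendsto_pow_atTop_nhds_zero_of_lt_one hr0 hr1).mul_const (lpos M)
        simpa using this
      exact tendsto_nhds_unique (hpt z) h0
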